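/- Let s ≥ 2 and let A₁,…,A_s be 2×2 complex matrices. Let M^{(s)} be the 2s×2s complex block companion matrix whose first two rows are (A₁ A₂ ⋯ A_s) (as 2×2 blocks) and whose remaining 2(s−1) rows form the block matrix (I_{2(s−1)} 0), i.e., M^{(s)}_{i+2, i} = 1 for 1 ≤ i ≤ 2s−2 and all other entries below the first two rows are 0. Define p^{(s)}(x) = det(M^{(s)} − x·I_{2s}), and similarly p^{(s−1)}(x) = det(M^{(s−1)} − x·I_{2(s−1)}) for the matrices A₁,…,A_{s−1}. Then p^{(s)}(x) = x²·p^{(s−1)}(x) − tr(A_s)·x^s + Σ_{ℓ=1}^{s−1} Det⟨A^{(ℓ,s)}⟩·x^{s−ℓ} + det(A_s). -/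

import Mathlib

open Matrix Finset

/-- The 2×2 matrix whose first column is the first column of `A` and whose
second column is the second column of `B`. -/
noncomputable def mixMat (A B : Matrix (Fin 2) (Fin 2) ℂ) : Matrix (Fin 2) (Fin 2) ℂ :=
  Matrix.of fun i j => if j = 0 then A i j else B i j

/-- `Det⟨A^{(i,j)}⟩ = det(A_{i,j}) + det(A_{j,i})`. -/
noncomputable def detPair (A B : Matrix (Fin 2) (Fin 2) ℂ) : ℂ :=
  (mixMat A B).det + (mixMat B A).det

/-- The `2s × 2s` block companion matrix whose first two rows are the blocks
`A₁ A₂ ⋯ A_s` and whose remaining rows form the block matrix `(I 0)`,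
i.e. `M (i+2) i = 1` for `0 ≤ i < 2s - 2` and all other entries below the
first two rows vanish. -/
noncomputable def companionM (s : ℕ) (A : ℕ → Matrix (Fin 2) (Fin 2) ℂ) :
    Matrix (Fin (2 * s)) (Fin (2 * s)) ℂ :=
  Matrix.of fun i j =>
    if h : (i : ℕ) < 2 then
      A ((j : ℕ) / 2 + 1) ⟨(i : ℕ), h⟩ ⟨(j : ℕ) % 2, Nat.mod_lt _ (by norm_num)⟩
    else if (j : ℕ) + 2 = (i : ℕ) then 1 else 0

noncomputable def Vmat (s : ℕ) (x : ℂ) : Matrix (Fin (2*s)) (Fin (2*s)) ℂ :=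
  Matrix.of fun i j =>
    if (i:ℕ) ≤ (j:ℕ) ∧ 2 ∣ ((j:ℕ) - (i:ℕ)) then x ^ (((j:ℕ) - (i:ℕ))/2) else 0

noncomputable def polyA (A : ℕ → Matrix (Fin 2) (Fin 2) ℂ) (x : ℂ) (n : ℕ) :
    Matrix (Fin 2) (Fin 2) ℂ :=
  Matrix.of fun i r =>
    (∑ k ∈ Icc 1 n, x ^ (n - k) * A k i r) - x ^ n * (if (i:ℕ) = (r:ℕ) then 1 else 0)

lemma Vmat_det (s : ℕ) (x : ℂ) : (Vmat s x).det = 1 := by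
  rw [Matrix.det_of_upperTriangular]
  · have : ∀ i : Fin (2*s), Vmat s x i i = 1 := by
      intro i; simp [Vmat]
    simp [this]
  · intro i j hji
    simp only [Vmat, of_apply, id_eq] at *
    rw [if_neg]
    intro ⟨h1, _⟩
    exact absurd h1 (by exact_mod_cast Nat.not_le.mpr hji)

lemma det_companionM (s : ℕ) (hs : 1 ≤ s) (B : ℕ → Matrix (Fin 2) (Fin 2) ℂ) :
    (companionM s B).det = (B s).det := by
  haveI : NeZero (2*s) := ⟨by omega⟩
  have hms : (2*s - 2) + 2 = 2*s := by omega
  set m := 2*s - 2 with hm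
  let E : Fin (2*s) ≃ Fin m ⊕ Fin 2 := (finCongr hms.symm).trans finSumFinEquiv.symm
  have hE : ∀ k : Fin (2*s), E k =
      if h : (k:ℕ) < m then Sum.inl ⟨(k:ℕ), h⟩ else Sum.inr ⟨(k:ℕ)-m, by omega⟩ := by
    intro k
    show finSumFinEquiv.symm (finCongr hms.symm k) = _
    rw [Equiv.symm_apply_eq]
    split
    · apply Fin.ext; simp
    · apply Fin.ext; simp; omega
  let C : Matrix (Fin 2) (Fin m) ℂ :=
    Matrix.of fun i j => B ((j:ℕ)/2 + 1) i ⟨(j:ℕ)%2, Nat.mod_lt _ (by norm_num)⟩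
  let F := Matrix.fromBlocks (1 : Matrix (Fin m) (Fin m) ℂ) 0 C (B s)
  let c1 : Fin (2*s) := ⟨2*s-1, by omega⟩
  let σ : Equiv.Perm (Fin (2*s)) := Equiv.addRight c1 * Equiv.addRight c1
  have hadd : ∀ a : Fin (2*s), ((a + c1 : Fin (2*s)) : ℕ)
      = if (a:ℕ) = 0 then 2*s-1 else (a:ℕ)-1 := by
    intro a
    rw [Fin.val_add]
    have ha := a.isLt
    split_ifs with h
    · rw [h]; simp [c1]
    · have : (a:ℕ) + (c1:ℕ) = ((a:ℕ) - 1) + 1*(2*s) := by simp only [c1]; omega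
      rw [this, Nat.add_mul_mod_self_right, Nat.mod_eq_of_lt (by omega)]
  have hσ : ∀ a : Fin (2*s), ((σ a : Fin (2*s)) : ℕ)
      = if (a:ℕ) < 2 then (a:ℕ) + 2*s - 2 else (a:ℕ) - 2 := by
    intro a
    have ha := a.isLt
    show ((a + c1 + c1 : Fin (2*s)) : ℕ) = _
    rw [hadd (a + c1), hadd a]
    split_ifs <;> omega
  have hmain : companionM s B = (F.submatrix E E).submatrix σ id := by
    ext i j
    have hi2s := i.isLt
    have hj2s := j.isLt
    rw [submatrix_apply, submatrix_apply, id_eq, hE, hE]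
    have hvi := hσ i
    have hB : ∀ (n n' : ℕ) (a a' b b' : Fin 2), n = n' → a = a' → b = b' →
        B n a b = B n' a' b' := by
      rintro n _ a _ b _ rfl rfl rfl; rfl
    by_cases hi : (i:ℕ) < 2
    · rw [if_pos hi] at hvi
      rw [dif_neg (by omega)]
      by_cases hj : (j:ℕ) < m
      · rw [dif_pos hj]
        show companionM s B i j = C _ _
        simp only [companionM, C, of_apply, dif_pos hi]
        apply hB <;> first | rfl | (apply Fin.ext; simp; try omega)
      · rw [dif_neg hj]
        show companionM s B i j = B s _ _
        simp only [companionM, of_apply, dif_pos hi]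
        apply hB <;> first | omega | (apply Fin.ext; simp; try omega)
    · rw [if_neg hi] at hvi
      rw [dif_pos (by omega)]
      by_cases hj : (j:ℕ) < m
      · rw [dif_pos hj]
        show companionM s B i j = (1 : Matrix (Fin m) (Fin m) ℂ) _ _
        simp only [companionM, of_apply, dif_neg hi, one_apply]
        by_cases h : (j:ℕ) + 2 = (i:ℕ)
        · rw [if_pos h, if_pos (by apply Fin.ext; simp; omega)]
        · rw [if_neg h, if_neg (by intro hc; apply h; have := congrArg Fin.val hc; simp at this; omega)]
      · rw [dif_neg hj]
        simp only [F, fromBlocks_apply₁₂, Matrix.zero_apply, companionM, of_apply, dif_neg hi]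
        rw [if_neg (by omega)]
  rw [hmain, det_permute, det_submatrix_equiv_self]
  have hsign : Equiv.Perm.sign σ = 1 := by
    have h2 : Equiv.Perm.sign σ
        = Equiv.Perm.sign (Equiv.addRight c1) * Equiv.Perm.sign (Equiv.addRight c1) :=
      _root_.map_mul _ _ _
    rw [h2]; exact Int.units_mul_self _
  rw [hsign]
  simp only [Units.val_one, Int.cast_one, one_mul]
  show (Matrix.fromBlocks _ _ _ _).det = _
  rw [Matrix.det_fromBlocks_zero₁₂, det_one, one_mul]

lemma companion_mul_V (s : ℕ) (A : ℕ → Matrix (Fin 2) (Fin 2) ℂ) (x : ℂ) :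
    (companionM s A - x • 1) * Vmat s x = companionM s (polyA A x) := by
  ext i j
  rw [Matrix.mul_apply]
  have hi2s := i.isLt
  have hj2s := j.isLt
  by_cases hi : (i:ℕ) < 2
  · -- top rows
    have hterm : ∀ k : Fin (2*s),
        ((companionM s A - x • 1) i k) * Vmat s x k j
          = (fun a : ℕ => A (a/2+1) ⟨(i:ℕ), hi⟩ ⟨a % 2, Nat.mod_lt _ (by norm_num)⟩ *
              (if a ≤ (j:ℕ) ∧ 2 ∣ ((j:ℕ) - a) then x ^ (((j:ℕ) - a)/2) else 0)) (k:ℕ)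
            - (if i = k then x * Vmat s x k j else 0) := by
      intro k
      simp only [companionM, Vmat, Matrix.sub_apply, Matrix.smul_apply, of_apply, one_apply, smul_eq_mul,
        dif_pos hi]
      split_ifs with h1 <;> ring
    rw [Finset.sum_congr rfl (fun k _ => hterm k), Finset.sum_sub_distrib,
      Finset.sum_ite_eq Finset.univ i (fun k => x * Vmat s x k j)]
    simp only [Finset.mem_univ, if_pos]
    simp only [companionM, of_apply, dif_pos hi, polyA]
    congr 1
    · -- main sum
      rw [Fin.sum_univ_eq_sum_range
        (fun a : ℕ => A (a/2+1) ⟨(i:ℕ), hi⟩ ⟨a % 2, Nat.mod_lt _ (by norm_num)⟩ *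
          (if a ≤ (j:ℕ) ∧ 2 ∣ ((j:ℕ) - a) then x ^ (((j:ℕ) - a)/2) else 0)) (2*s)]
      rw [← Finset.sum_filter_of_ne (p := fun a => a % 2 = (j:ℕ) % 2 ∧ a ≤ (j:ℕ))
        (by
          intro a _ hne
          by_contra hp
          exact hne (by rw [if_neg (by omega), mul_zero]))]
      have himg : (Finset.range (2*s)).filter (fun a => a % 2 = (j:ℕ) % 2 ∧ a ≤ (j:ℕ))
          = (Finset.range ((j:ℕ)/2+1)).image (fun m => 2*m + (j:ℕ)%2) := by
        ext a
        simp only [Finset.mem_filter, Finset.mem_image, Finset.mem_range]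
        constructor
        · rintro ⟨h1, h2, h3⟩; exact ⟨a/2, by omega, by omega⟩
        · rintro ⟨m, hm, rfl⟩; exact ⟨by omega, by omega, by omega⟩
      rw [himg, Finset.sum_image (by intro a _ b _ h; simp only at h; omega)]
      rw [← Finset.Ico_add_one_right_eq_Icc, Finset.sum_Ico_eq_sum_range]
      apply Finset.sum_congr rfl
      intro mi hmem
      simp only [Finset.mem_range] at hmem
      have e1 : (2*mi + (j:ℕ)%2)/2 + 1 = 1 + mi := by omega
      have e2 : (2*mi + (j:ℕ)%2) % 2 = (j:ℕ) % 2 := by omega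
      have e3 : ((j:ℕ) - (2*mi + (j:ℕ)%2))/2 = (j:ℕ)/2 + 1 - (1 + mi) := by omega
      rw [if_pos ⟨by omega, by omega⟩]
      simp only [e1, e2, e3]
      exact mul_comm _ _
    · -- the x-shift term
      simp only [Vmat, of_apply]
      split_ifs with h1 h2 h2
      · have he : ((j:ℕ) - (i:ℕ))/2 = (j:ℕ)/2 := by omega
        rw [he, mul_one, ← pow_succ']
      · exact absurd (by omega : (i:ℕ) = (j:ℕ) % 2) h2
      · exact absurd ⟨by omega, by omega⟩ h1
      · ring
  · -- lower rows
    have hterm : ∀ k : Fin (2*s),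
        ((companionM s A - x • 1) i k) * Vmat s x k j
          = (if (⟨(i:ℕ)-2, by omega⟩ : Fin (2*s)) = k then Vmat s x k j else 0)
            - (if i = k then x * Vmat s x k j else 0) := by
      intro k
      have hk2s := k.isLt
      have hiff : ((⟨(i:ℕ)-2, by omega⟩ : Fin (2*s)) = k) ↔ ((k:ℕ) + 2 = (i:ℕ)) := by
        constructor
        · intro h; have := congrArg Fin.val h; simp at this; omega
        · intro h; apply Fin.ext; simp; omega
      simp only [companionM, Matrix.sub_apply, Matrix.smul_apply, of_apply, one_apply, smul_eq_mul,
        dif_neg hi, hiff]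
      by_cases ha : (k:ℕ) + 2 = (i:ℕ) <;> by_cases hb : i = k
      · exact absurd ha (by rw [hb]; omega)
      · rw [if_pos ha, if_pos ha, if_neg hb, if_neg hb]; ring
      · rw [if_neg ha, if_neg ha, if_pos hb, if_pos hb]; ring
      · rw [if_neg ha, if_neg ha, if_neg hb, if_neg hb]; ring
    rw [Finset.sum_congr rfl (fun k _ => hterm k), Finset.sum_sub_distrib,
      Finset.sum_ite_eq Finset.univ (⟨(i:ℕ)-2, by omega⟩ : Fin (2*s)) (fun k => Vmat s x k j),
      Finset.sum_ite_eq Finset.univ i (fun k => x * Vmat s x k j)]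
    simp only [Finset.mem_univ, if_pos]
    simp only [companionM, of_apply, dif_neg hi, Vmat]
    split_ifs
    all_goals try (exfalso; omega)
    all_goals try ring
    all_goals try (
      have he : ((j:ℕ) - ((i:ℕ)-2))/2 = ((j:ℕ) - (i:ℕ))/2 + 1 := by omega
      rw [he, pow_succ']
      ring)
    all_goals (
      have he : ((j:ℕ) - ((i:ℕ)-2))/2 = 0 := by omega
      rw [he, pow_zero])

lemma det_companion_sub (s : ℕ) (hs : 1 ≤ s) (A : ℕ → Matrix (Fin 2) (Fin 2) ℂ) (x : ℂ) :
    (companionM s A - x • 1).det = (polyA A x s).det := by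
  have h := congrArg Matrix.det (companion_mul_V s A x)
  rw [Matrix.det_mul, Vmat_det, mul_one, det_companionM s hs] at h
  exact h

theorem stmt_2 (s : ℕ) (hs : 2 ≤ s) (A : ℕ → Matrix (Fin 2) (Fin 2) ℂ) :
    ∀ x : ℂ,
      (companionM s A - x • (1 : Matrix (Fin (2 * s)) (Fin (2 * s)) ℂ)).det =
        x ^ 2 * (companionM (s - 1) A
            - x • (1 : Matrix (Fin (2 * (s - 1))) (Fin (2 * (s - 1))) ℂ)).det
        - (A s).trace * x ^ s
        + (∑ ℓ ∈ Icc 1 (s - 1), detPair (A ℓ) (A s) * x ^ (s - ℓ))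
        + (A s).det := by
  intro x
  obtain ⟨n, rfl⟩ : ∃ n, s = n + 1 := ⟨s - 1, by omega⟩
  have hn : 1 ≤ n := by omega
  show (companionM (n+1) A - x • (1 : Matrix (Fin (2 * (n+1))) (Fin (2 * (n+1))) ℂ)).det =
      x ^ 2 * (companionM n A - x • (1 : Matrix (Fin (2 * n)) (Fin (2 * n)) ℂ)).det
      - (A (n+1)).trace * x ^ (n+1)
      + (∑ ℓ ∈ Icc 1 n, detPair (A ℓ) (A (n+1)) * x ^ (n+1 - ℓ))
      + (A (n+1)).det
  rw [det_companion_sub (n+1) (by omega) A x, det_companion_sub n hn A x]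
  have hpoly : ∀ m : ℕ, (polyA A x m).det =
      ((∑ k ∈ Icc 1 m, x^(m-k) * A k 0 0) - x^m) * ((∑ k ∈ Icc 1 m, x^(m-k) * A k 1 1) - x^m)
        - (∑ k ∈ Icc 1 m, x^(m-k) * A k 0 1) * (∑ k ∈ Icc 1 m, x^(m-k) * A k 1 0) := by
    intro m
    simp [polyA, Matrix.det_fin_two]
  have hstep : ∀ a b : Fin 2,
      x * (∑ k ∈ Icc 1 n, x^(n-k) * A k a b) = ∑ ℓ ∈ Icc 1 n, x^(n+1-ℓ) * A ℓ a b := by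
    intro a b
    rw [Finset.mul_sum]
    apply Finset.sum_congr rfl
    intro k hk
    simp only [Finset.mem_Icc] at hk
    have h1 : n + 1 - k = (n - k) + 1 := by omega
    rw [h1, pow_succ']
    ring
  have hS : ∀ a b : Fin 2,
      (∑ k ∈ Icc 1 (n+1), x^(n+1-k) * A k a b)
        = x * (∑ k ∈ Icc 1 n, x^(n-k) * A k a b) + A (n+1) a b := by
    intro a b
    rw [Finset.sum_Icc_succ_top (by omega : 1 ≤ n+1), hstep]
    simp
  have hsum : (∑ ℓ ∈ Icc 1 n, detPair (A ℓ) (A (n+1)) * x ^ (n+1-ℓ))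
      = A (n+1) 1 1 * (x * (∑ k ∈ Icc 1 n, x^(n-k) * A k 0 0))
        + A (n+1) 0 0 * (x * (∑ k ∈ Icc 1 n, x^(n-k) * A k 1 1))
        - A (n+1) 0 1 * (x * (∑ k ∈ Icc 1 n, x^(n-k) * A k 1 0))
        - A (n+1) 1 0 * (x * (∑ k ∈ Icc 1 n, x^(n-k) * A k 0 1)) := by
    rw [hstep, hstep, hstep, hstep, Finset.mul_sum, Finset.mul_sum, Finset.mul_sum,
      Finset.mul_sum]
    rw [← Finset.sum_add_distrib, ← Finset.sum_sub_distrib, ← Finset.sum_sub_distrib]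
    apply Finset.sum_congr rfl
    intro ℓ _
    simp [detPair, mixMat, Matrix.det_fin_two]
    ring
  rw [hpoly, hpoly, hsum, Matrix.trace_fin_two, Matrix.det_fin_two (A (n+1)),
    hS 0 0, hS 0 1, hS 1 0, hS 1 1, pow_succ']
  ring
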